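/- Let G = N ⋊ ⟨ξ⟩ be a semidirect product of a group N with an infinite cyclic group generated by ξ, let M be a trivial G-module, and let ρ ∈ Z¹(ℤ, H²(N,M)) be determined by ρ₁ = [μ] with ρ_{m+n} = ρ_m + ξⁿ_* ρ_n. Then the function ω : G³ → M defined by ω(n₁ξ^{l₁}, n₂ξ^{l₂}, n₃ξ^{l₃}) = -ρ_{l₁}(ξ^{l₁}(n₂), ξ^{l₁+l₂}(n₃)) is a 3-cocycle on G with values in M. -/

import Mathlib

/-- The inhomogeneous 3-cocycle identity for a trivial `G`-module `M`. -/
def IsCocycle3 {G M : Type*} [Group G] [AddCommGroup M] (ω : G → G → G → M) : Prop :=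
  ∀ g h k l : G,
    ω h k l + ω g (h * k) l + ω g h k = ω (g * h) k l + ω g h (k * l)

/-- let `G = N ⋊ ⟨ξ⟩` with `⟨ξ⟩ ≅ ℤ`, `M` a trivial `G`-module, and let
`ρ : ℤ → Z²(N, M)` be a cochain-level 1-cocycle: each `ρ_l` is a 2-cocycle on `N`, and
`ρ_{m+n} = ρ_m + ξⁿ₊ρ_n`, where `(ξⁿ₊μ)(a,b) = μ(ξ⁻ⁿ(a), ξ⁻ⁿ(b))` (with
`ξ(n) = ξ n ξ⁻¹`).  Then `ω(n₁ξ^{l₁}, n₂ξ^{l₂}, n₃ξ^{l₃}) = -ρ_{l₁}(ξ^{l₁}(n₂), ξ^{l₁+l₂}(n₃))`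
is a 3-cocycle on `G` with values in `M`. -/
theorem stmt_17 (N : Type*) [Group N] (M : Type*) [AddCommGroup M]
    (φ : Multiplicative ℤ →* MulAut N)
    (ρ : ℤ → N → N → M)
    (hcocy : ∀ (l : ℤ) (a b c : N),
      ρ l b c + ρ l a (b * c) = ρ l (a * b) c + ρ l a b)
    (hrel : ∀ (m n : ℤ) (a b : N),
      ρ (m + n) a b =
        ρ m a b +
          ρ n (φ (Multiplicative.ofAdd (-n)) a) (φ (Multiplicative.ofAdd (-n)) b)) :
    IsCocycle3 (G := SemidirectProduct N (Multiplicative ℤ) φ) (M := M)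
      (fun g₁ g₂ g₃ =>
        - ρ (Multiplicative.toAdd g₁.right)
            (φ g₁.right g₂.left)
            (φ (g₁.right * g₂.right) g₃.left)) := by
  have h0 : ∀ a b : N, ρ 0 a b = 0 := by
    intro a b
    have h := hrel 0 0 a b
    simpa using h
  have inv : ∀ (n : ℤ) (a b : N),
      ρ n (φ (Multiplicative.ofAdd (-n)) a) (φ (Multiplicative.ofAdd (-n)) b) = ρ n a b := by
    intro n a b
    have h := hrel 0 n a b
    rw [zero_add, h0, zero_add] at h
    exact h.symm
  have hadd : ∀ (m n : ℤ) (a b : N), ρ (m + n) a b = ρ m a b + ρ n a b := by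
    intro m n a b
    rw [hrel m n a b, inv n a b]
  have hm1 : ∀ a b : N, ρ (-1) a b = - ρ 1 a b := by
    intro a b
    have h := hadd 1 (-1) a b
    norm_num [h0] at h
    exact (eq_neg_of_add_eq_zero_right h.symm)
  have hz : ∀ (n : ℤ) (a b : N), ρ n a b = n • ρ 1 a b := by
    intro n a b
    induction n using Int.induction_on with
    | zero => simp [h0]
    | succ k ih => rw [hadd k 1 a b, ih, add_zsmul, one_zsmul]
    | pred k ih =>
        rw [show (-(k:ℤ) - 1) = (-k) + (-1) by ring, hadd, ih, hm1, add_zsmul]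
        simp
  have inv1fwd : ∀ a b : N,
      ρ 1 (φ (Multiplicative.ofAdd (1:ℤ)) a) (φ (Multiplicative.ofAdd (1:ℤ)) b) = ρ 1 a b := by
    intro a b
    have h := inv 1 (φ (Multiplicative.ofAdd (1:ℤ)) a) (φ (Multiplicative.ofAdd (1:ℤ)) b)
    have e : ∀ x : N, φ (Multiplicative.ofAdd (-1:ℤ)) (φ (Multiplicative.ofAdd (1:ℤ)) x) = x := by
      intro x
      rw [← MulAut.mul_apply, ← map_mul]
      simp [← ofAdd_add]
    rw [e, e] at h
    exact h.symm
  have invgen1 : ∀ (l : ℤ) (a b : N),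
      ρ 1 (φ (Multiplicative.ofAdd l) a) (φ (Multiplicative.ofAdd l) b) = ρ 1 a b := by
    intro l
    induction l using Int.induction_on with
    | zero => simp
    | succ k ih =>
        intro a b
        rw [show ((k:ℤ) + 1) = (k:ℤ) + 1 from rfl, ofAdd_add, map_mul, MulAut.mul_apply,
          MulAut.mul_apply, ih, inv1fwd]
    | pred k ih =>
        intro a b
        rw [show (-(k:ℤ) - 1) = (-(k:ℤ)) + (-1) by ring, ofAdd_add, map_mul, MulAut.mul_apply,
          MulAut.mul_apply, ih, inv 1]
  have invgen : ∀ (n l : ℤ) (a b : N),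
      ρ n (φ (Multiplicative.ofAdd l) a) (φ (Multiplicative.ofAdd l) b) = ρ n a b := by
    intro n l a b
    rw [hz n, hz n, invgen1 l a b]
  intro g h k w
  obtain ⟨a, s⟩ := g
  obtain ⟨b, t⟩ := h
  obtain ⟨c, u⟩ := k
  obtain ⟨d, v⟩ := w
  simp only [SemidirectProduct.mul_left, SemidirectProduct.mul_right, map_mul,
    MulAut.mul_apply, toAdd_mul]
  set m : ℤ := Multiplicative.toAdd s with hmdef
  set n : ℤ := Multiplicative.toAdd t with hndef
  set A : N := φ s b with hA
  set B : N := φ s (φ t c) with hB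
  set C : N := φ s (φ t (φ u d)) with hC
  have hs : Multiplicative.ofAdd m = s := rfl
  have t1 : ρ n (φ t c) (φ t (φ u d)) = ρ n B C := by
    rw [hB, hC, ← hs, invgen n m]
  have t2 : ρ (m + n) B C = ρ m B C + ρ n B C := hadd m n B C
  have t3 : ρ m B C + ρ m A (B * C) = ρ m (A * B) C + ρ m A B := hcocy m A B C
  rw [t1, t2]
  -- goal: -ρ n B C + -ρ m (A*B) C + -ρ m A B = -(ρ m B C + ρ n B C) + -ρ m A (B*C)
  have : ρ m (A * B) C + ρ m A B = ρ m B C + ρ m A (B * C) := t3.symm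
  calc -ρ n B C + -ρ m (A * B) C + -ρ m A B
      = -ρ n B C + -(ρ m (A * B) C + ρ m A B) := by abel
    _ = -ρ n B C + -(ρ m B C + ρ m A (B * C)) := by rw [this]
    _ = -(ρ m B C + ρ n B C) + -ρ m A (B * C) := by abel
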